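/- Let C > 0, p > 0, G > 0, s ≥ 0, and t₀ ∈ ℝ, and let a : [t₀,∞) → ℝ be differentiable with a(t) > 0 for all t and a(t) → ∞ as t → ∞. Define S(t,χ) = C·(4π·χ²·a(t)²/G)^p + (4/3)·π·χ³·s. Suppose χ : [t₀,∞) → (0,∞) satisfies the extremality condition a(t)·∂S/∂t(t,χ(t)) − ∂S/∂χ(t,χ(t)) = 0 for all t ≥ t₀, and that S(t,χ(t)) converges to a finite positive limit S_max as t → ∞. Then χ(t)·a(t) → √((G/4π)·(S_max/C)^{1/p}) and a'(t)/a(t) → √((4π/G)·(C/S_max)^{1/p}) as t → ∞. -/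

import Mathlib

open Real Filter

/-- Generalized no-hair theorem with a power-law gravitational entropy
`f(A/G) = C·(A/G)^p`: the scale factor is still asymptotically de Sitter, with
Hubble constant `H = √((4π/G)·(C/S_max)^{1/p})`. -/
theorem stmt_19 (C p G s t₀ Smax : ℝ) (hC : 0 < C) (hp : 0 < p) (hG : 0 < G)
    (hs : 0 ≤ s) (hSmax : 0 < Smax)
    (a : ℝ → ℝ)
    (ha_diff : ∀ t, t₀ ≤ t → DifferentiableAt ℝ a t)
    (ha_pos : ∀ t, t₀ ≤ t → 0 < a t)
    (ha_inf : Tendsto a atTop atTop)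
    (S : ℝ → ℝ → ℝ)
    (hS : ∀ t χ, S t χ = C * (4 * π * χ ^ 2 * (a t) ^ 2 / G) ^ p + (4 / 3) * π * χ ^ 3 * s)
    (χ : ℝ → ℝ)
    (hχ_pos : ∀ t, t₀ ≤ t → 0 < χ t)
    (hext : ∀ t, t₀ ≤ t →
      a t * deriv (fun t' => S t' (χ t)) t - deriv (fun c => S t c) (χ t) = 0)
    (hlim : Tendsto (fun t => S t (χ t)) atTop (nhds Smax)) :
    Tendsto (fun t => χ t * a t) atTop
      (nhds (Real.sqrt ((G / (4 * π)) * (Smax / C) ^ ((1:ℝ)/p)))) ∧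
    Tendsto (fun t => deriv a t / a t) atTop
      (nhds (Real.sqrt ((4 * π / G) * (C / Smax) ^ ((1:ℝ)/p)))) := by
  have hπ : (0:ℝ) < π := Real.pi_pos
  set L : ℝ := (Smax / C) ^ ((1:ℝ)/p) with hLdef
  have hLpos : 0 < L := Real.rpow_pos_of_pos (div_pos hSmax hC) _
  set X : ℝ → ℝ := fun t => 4 * π * (χ t) ^ 2 * (a t) ^ 2 / G with hXdef
  have hXpos : ∀ t, t₀ ≤ t → 0 < X t := by
    intro t ht
    have h1 := hχ_pos t ht
    have h2 := ha_pos t ht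
    simp only [hXdef]
    positivity
  have hSX : ∀ t, S t (χ t) = C * (X t) ^ p + (4/3) * π * (χ t) ^ 3 * s := by
    intro t; simp only [hXdef]; exact hS t (χ t)
  -- eventual upper bound on X
  have hBdd : ∀ᶠ t in atTop, X t ≤ ((Smax + 1) / C) ^ ((1:ℝ)/p) := by
    have h1 : ∀ᶠ t in atTop, S t (χ t) ≤ Smax + 1 :=
      (hlim.eventually_lt_const (lt_add_one Smax)).mono fun t h => h.le
    filter_upwards [h1, eventually_ge_atTop t₀] with t hSle ht
    have hXp : (X t) ^ p ≤ (Smax + 1) / C := by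
      have hm : 0 ≤ (4/3) * π * (χ t) ^ 3 * s := by
        have := (hχ_pos t ht).le; positivity
      have : C * (X t) ^ p ≤ Smax + 1 := by
        have := hSX t; nlinarith [hSle]
      rw [le_div_iff₀ hC]; linarith [this]
    calc X t = ((X t) ^ p) ^ ((1:ℝ)/p) := by
          rw [← Real.rpow_mul (hXpos t ht).le, mul_one_div_cancel hp.ne', Real.rpow_one]
      _ ≤ ((Smax + 1) / C) ^ ((1:ℝ)/p) := by
          apply Real.rpow_le_rpow (Real.rpow_nonneg (hXpos t ht).le _) hXp
          positivity
  -- χ tends to 0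
  have hχ0 : Tendsto χ atTop (nhds 0) := by
    set B : ℝ := ((Smax + 1) / C) ^ ((1:ℝ)/p) with hBdef
    have hB : 0 ≤ B := Real.rpow_nonneg (by positivity) _
    have hbound : ∀ᶠ t in atTop, χ t ≤ Real.sqrt (G * B / (4 * π)) / a t := by
      filter_upwards [hBdd, eventually_ge_atTop t₀] with t hXB ht
      have ha := ha_pos t ht
      have hc := hχ_pos t ht
      have hsq : (χ t * a t) ^ 2 ≤ G * B / (4 * π) := by
        have hXt : (χ t) ^ 2 * (a t) ^ 2 = G * X t / (4 * π) := by
          simp only [hXdef]; field_simp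
        have : G * X t / (4 * π) ≤ G * B / (4 * π) := by
          apply div_le_div_of_nonneg_right _ (by positivity)
          · exact mul_le_mul_of_nonneg_left hXB hG.le
        calc (χ t * a t) ^ 2 = (χ t) ^ 2 * (a t) ^ 2 := by ring
          _ = G * X t / (4 * π) := hXt
          _ ≤ G * B / (4 * π) := this
      have h1 : χ t * a t ≤ Real.sqrt (G * B / (4 * π)) := by
        rw [← Real.sqrt_sq (by positivity : (0:ℝ) ≤ χ t * a t)]
        exact Real.sqrt_le_sqrt hsq
      exact (le_div_iff₀ ha).mpr h1
    have hzero : Tendsto (fun t => Real.sqrt (G * B / (4 * π)) / a t) atTop (nhds 0) :=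
      Tendsto.div_atTop tendsto_const_nhds ha_inf
    refine tendsto_of_tendsto_of_tendsto_of_le_of_le' tendsto_const_nhds hzero ?_ hbound
    filter_upwards [eventually_ge_atTop t₀] with t ht
    exact (hχ_pos t ht).le
  -- X tends to L
  have hmatter : Tendsto (fun t => (4/3) * π * (χ t) ^ 3 * s) atTop (nhds 0) := by
    have h3 : Tendsto (fun t => (χ t) ^ 3) atTop (nhds 0) := by
      have := hχ0.pow 3
      simpa using this
    have := (h3.const_mul ((4/3) * π)).mul_const s
    simpa using this
  have hCXp : Tendsto (fun t => C * (X t) ^ p) atTop (nhds Smax) := by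
    have h := hlim.sub hmatter
    simp only [sub_zero] at h
    refine h.congr fun t => ?_
    rw [hSX t]; ring
  have hXp : Tendsto (fun t => (X t) ^ p) atTop (nhds (Smax / C)) := by
    have h := hCXp.const_mul C⁻¹
    have h2 : Tendsto (fun t => (X t) ^ p) atTop (nhds (C⁻¹ * Smax)) := by
      refine h.congr fun t => ?_
      field_simp
    rwa [inv_mul_eq_div] at h2
  have hXL : Tendsto X atTop (nhds L) := by
    have hcont : ContinuousAt (fun y : ℝ => y ^ ((1:ℝ)/p)) (Smax / C) :=
      Real.continuousAt_rpow_const _ _ (Or.inl (div_pos hSmax hC).ne')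
    have h := hcont.tendsto.comp hXp
    refine h.congr' ?_
    filter_upwards [eventually_ge_atTop t₀] with t ht
    simp only [Function.comp]
    rw [← Real.rpow_mul (hXpos t ht).le, mul_one_div_cancel hp.ne', Real.rpow_one]
  -- first limit
  have hAlim : Tendsto (fun t => χ t * a t) atTop (nhds (Real.sqrt ((G / (4 * π)) * L))) := by
    have h1 : Tendsto (fun t => G * X t / (4 * π)) atTop (nhds (G * L / (4 * π))) :=
      (hXL.const_mul G).div_const (4 * π)
    have h2 := (Real.continuous_sqrt.continuousAt (x := G * L / (4 * π))).tendsto.comp h1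
    have heq : G * L / (4 * π) = (G / (4 * π)) * L := by ring
    rw [heq] at h2
    refine h2.congr' ?_
    filter_upwards [eventually_ge_atTop t₀] with t ht
    simp only [Function.comp]
    have hc := hχ_pos t ht
    have ha := ha_pos t ht
    have hXt : G * X t / (4 * π) = (χ t * a t) ^ 2 := by
      simp only [hXdef]; field_simp
    rw [hXt, Real.sqrt_sq (by positivity : (0:ℝ) ≤ χ t * a t)]
  -- key identity from extremality
  have hkey : ∀ t, t₀ ≤ t → χ t * deriv a t =
      1 + G * s * χ t / (2 * C * p * (X t) ^ (p - 1) * (a t) ^ 2) := by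
    intro t ht
    have hat := ha_pos t ht
    have hct := hχ_pos t ht
    have hd := ha_diff t ht
    have hXt := hXpos t ht
    have hfx : (0:ℝ) < 4 * π * (χ t) ^ 2 * (a t) ^ 2 / G := by positivity
    -- time derivative of S t' (χ t) at t
    have hu : HasDerivAt (fun t' => 4 * π * (χ t) ^ 2 * (a t') ^ 2 / G)
        (4 * π * (χ t) ^ 2 * (2 * a t ^ 1 * deriv a t) / G) t :=
      ((hd.hasDerivAt.pow 2).const_mul (4 * π * (χ t) ^ 2)).div_const G
    have h1 := ((hu.rpow_const (p := p) (Or.inl hfx.ne')).const_mul C).add_const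
      ((4/3) * π * (χ t) ^ 3 * s)
    have hDt : deriv (fun t' => S t' (χ t)) t =
        C * (4 * π * (χ t) ^ 2 * (2 * a t ^ 1 * deriv a t) / G * p *
          (4 * π * (χ t) ^ 2 * (a t) ^ 2 / G) ^ (p - 1)) := by
      rw [show (fun t' => S t' (χ t)) = fun t' =>
        C * (4 * π * (χ t) ^ 2 * (a t') ^ 2 / G) ^ p + (4/3) * π * (χ t) ^ 3 * s
        from funext fun t' => hS t' (χ t)]
      exact h1.deriv
    -- χ derivative of S t · at χ t
    have hv : HasDerivAt (fun y => 4 * π * y ^ 2 * (a t) ^ 2 / G)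
        (4 * π * (2 * (χ t) ^ 1) * (a t) ^ 2 / G) (χ t) :=
      (((hasDerivAt_pow 2 (χ t)).const_mul (4 * π)).mul_const ((a t) ^ 2)).div_const G
    have h2 := ((hv.rpow_const (p := p) (Or.inl hfx.ne')).const_mul C).add
      (((hasDerivAt_pow 3 (χ t)).const_mul ((4/3) * π)).mul_const s)
    have hDχ : deriv (fun y => S t y) (χ t) =
        C * (4 * π * (2 * (χ t) ^ 1) * (a t) ^ 2 / G * p *
          (4 * π * (χ t) ^ 2 * (a t) ^ 2 / G) ^ (p - 1)) +
          (4/3) * π * (3 * (χ t) ^ 2) * s := by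
      rw [show (fun y => S t y) = fun y =>
        C * (4 * π * y ^ 2 * (a t) ^ 2 / G) ^ p + (4/3) * π * y ^ 3 * s
        from funext fun y => hS t y]
      exact h2.deriv
    have hE := hext t ht
    rw [hDt, hDχ] at hE
    simp only [hXdef]
    set Y : ℝ := (4 * π * (χ t) ^ 2 * (a t) ^ 2 / G) ^ (p - 1) with hYdef
    have hY : 0 < Y := Real.rpow_pos_of_pos hfx _
    have hπ' : π ≠ 0 := hπ.ne'
    have hG' : G ≠ 0 := hG.ne'
    have hC' : C ≠ 0 := hC.ne'
    have hp' : p ≠ 0 := hp.ne'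
    have hY' : Y ≠ 0 := hY.ne'
    have hat' : a t ≠ 0 := hat.ne'
    have hct' : χ t ≠ 0 := hct.ne'
    field_simp at hE ⊢
    apply mul_left_cancel₀ (show (4 * π * χ t : ℝ) ≠ 0 by positivity)
    linear_combination hE
  -- correction term tends to zero
  have hYL : Tendsto (fun t => (X t) ^ (p - 1)) atTop (nhds (L ^ (p - 1))) :=
    (Real.continuousAt_rpow_const L (p - 1) (Or.inl hLpos.ne')).tendsto.comp hXL
  have hsq : Tendsto (fun t => (a t) ^ 2) atTop atTop := by
    refine (ha_inf.atTop_mul_atTop₀ ha_inf).congr fun t => ?_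
    ring
  have hcoef : Tendsto (fun t => 2 * C * p * (X t) ^ (p - 1)) atTop
      (nhds (2 * C * p * L ^ (p - 1))) := hYL.const_mul (2 * C * p)
  have hden : Tendsto (fun t => 2 * C * p * (X t) ^ (p - 1) * (a t) ^ 2) atTop atTop := by
    refine Tendsto.pos_mul_atTop ?_ hcoef hsq
    have : (0:ℝ) < L ^ (p - 1) := Real.rpow_pos_of_pos hLpos _
    positivity
  have hnum : Tendsto (fun t => G * s * χ t) atTop (nhds 0) := by
    have := hχ0.const_mul (G * s)
    simpa using this
  have hcorr : Tendsto (fun t => G * s * χ t / (2 * C * p * (X t) ^ (p - 1) * (a t) ^ 2))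
      atTop (nhds 0) := hnum.div_atTop hden
  have hχa' : Tendsto (fun t => χ t * deriv a t) atTop (nhds 1) := by
    have h := (tendsto_const_nhds (x := (1:ℝ)) (f := atTop)).add hcorr
    rw [add_zero] at h
    refine h.congr' ?_
    filter_upwards [eventually_ge_atTop t₀] with t ht
    exact (hkey t ht).symm
  refine ⟨hAlim, ?_⟩
  have hsqrtpos : 0 < Real.sqrt ((G / (4 * π)) * L) :=
    Real.sqrt_pos.mpr (by positivity)
  have hquot : Tendsto (fun t => (χ t * deriv a t) / (χ t * a t)) atTop
      (nhds (1 / Real.sqrt ((G / (4 * π)) * L))) := hχa'.div hAlim hsqrtpos.ne'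
  have heq : (1:ℝ) / Real.sqrt ((G / (4 * π)) * L) =
      Real.sqrt ((4 * π / G) * (C / Smax) ^ ((1:ℝ)/p)) := by
    rw [one_div, ← Real.sqrt_inv]
    congr 1
    rw [hLdef, mul_inv, ← Real.inv_rpow (div_pos hSmax hC).le, inv_div, inv_div]
  rw [heq] at hquot
  refine hquot.congr' ?_
  filter_upwards [eventually_ge_atTop t₀] with t ht
  exact mul_div_mul_left (deriv a t) (a t) (hχ_pos t ht).ne'
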